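/- arXiv:2303.15723 — 4 statements merged into one kernel-verified Lean document; each statement's English description precedes it below -/
import Mathlib

section
/- Let Θ be a finite set of states with n := |Θ| ≥ 2, let 𝓔 be a set of experiments, and let C : 𝓔 × Δ(Θ) → [0,∞] be a cost functional. Suppose Assumption (A) holds: there exist ε > 0, η > 0 and T ≥ 0 such that for every μ ∈ Δ(Θ) with ‖μ − (1/n, …, 1/n)‖ < η there exists an experiment E_μ ∈ 𝓔 with Υ(E_μ, μ) > ε and C(E_μ, μ) ≤ T. Then there exist u > 0 and d > 0 such that: (i) for every μ ∈ Δ(Θ), max( u − d·min_θ μ(θ), sup_{E=(S,χ)∈𝓔} ( u − d·Σ_{s∈S} min_θ (μ(θ)·χ(θ)(s)) − C(E, μ) ) ) ≥ 0 (every informed Bob accepts the contract, possibly after acquiring information); and (ii) for every σ ∈ Δ(Θ), min_θ (u − d·σ(θ)) ≤ u − d/n < 0 (the uninformed, maxmin-evaluating Bob strictly prefers to reject no matter how he randomizes his announcement). -/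
open scoped BigOperators ENNReal

/-- A statistical experiment: a finite nonempty signal set (modeled as `Fin k` with `0 < k`)
together with a stochastic map `χ` from states to distributions over signals. -/
structure Experiment (Θ : Type) [Fintype Θ] where
  k : ℕ
  k_pos : 0 < k
  χ : Θ → Fin k → ℝ
  χ_nonneg : ∀ θ s, 0 ≤ χ θ s
  χ_sum : ∀ θ, ∑ s, χ θ s = 1

/-- `μ` is a probability vector on the finite set `Θ`. -/
def IsDist {Θ : Type} [Fintype Θ] (μ : Θ → ℝ) : Prop :=
  (∀ θ, 0 ≤ μ θ) ∧ ∑ θ, μ θ = 1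

/-- Euclidean distance between two vectors indexed by `Θ`. -/
noncomputable def euclDist {Θ : Type} [Fintype Θ] (μ ν : Θ → ℝ) : ℝ :=
  Real.sqrt (∑ θ, (μ θ - ν θ) ^ 2)

/-- `Υ(E, μ) = min_θ μ(θ) − Σ_s min_θ (μ(θ)·χ(θ)(s))`. -/
noncomputable def Upsilon {Θ : Type} [Fintype Θ] (E : Experiment Θ) (μ : Θ → ℝ) : ℝ :=
  (⨅ θ, μ θ) - ∑ s, ⨅ θ, μ θ * E.χ θ s

section Aux

variable {Θ : Type} [Fintype Θ]

lemma ciInf_le_of_mem (f : Θ → ℝ) (θ : Θ) : (⨅ θ', f θ') ≤ f θ :=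
  ciInf_le (Set.finite_range f).bddBelow θ

/-- If `μ` is a distribution, some coordinate is at least `1/n` and some at most `1/n`. -/
lemma exists_ge_inv_card [Nonempty Θ] {μ : Θ → ℝ} (hμ : IsDist μ) :
    ∃ θ, 1 / (Fintype.card Θ : ℝ) ≤ μ θ := by
  have hcard : (0 : ℝ) < (Fintype.card Θ : ℝ) := by
    exact_mod_cast Fintype.card_pos
  have hsum : ∑ _θ : Θ, (1 / (Fintype.card Θ : ℝ)) ≤ ∑ θ, μ θ := by
    rw [Finset.sum_const, hμ.2, Finset.card_univ, nsmul_eq_mul]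
    field_simp
    exact le_refl _
  obtain ⟨θ, _, hθ⟩ := Finset.exists_le_of_sum_le Finset.univ_nonempty hsum
  exact ⟨θ, hθ⟩

lemma exists_le_inv_card [Nonempty Θ] {μ : Θ → ℝ} (hμ : IsDist μ) :
    ∃ θ, μ θ ≤ 1 / (Fintype.card Θ : ℝ) := by
  have hsum : ∑ θ, μ θ ≤ ∑ _θ : Θ, (1 / (Fintype.card Θ : ℝ)) := by
    rw [Finset.sum_const, hμ.2, Finset.card_univ, nsmul_eq_mul]
    field_simp
    exact le_refl _
  obtain ⟨θ, _, hθ⟩ := Finset.exists_le_of_sum_le Finset.univ_nonempty hsum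
  exact ⟨θ, hθ⟩

/-- If `μ` is far from uniform, some coordinate is below `1/n - η/(√n (n-1))`. -/
lemma exists_small_of_far (hn : 2 ≤ Fintype.card Θ) {μ : Θ → ℝ} (hμ : IsDist μ)
    {η : ℝ} (hη : 0 < η)
    (hfar : η ≤ euclDist μ (fun _ => 1 / (Fintype.card Θ : ℝ))) :
    ∃ θ, μ θ ≤ 1 / (Fintype.card Θ : ℝ)
      - η / (Real.sqrt (Fintype.card Θ : ℝ) * ((Fintype.card Θ : ℝ) - 1)) := by
  classical
  haveI : Nonempty Θ := Fintype.card_pos_iff.mp (by omega)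
  set n : ℝ := (Fintype.card Θ : ℝ) with hn_def
  have hn2 : (2 : ℝ) ≤ n := by rw [hn_def]; exact_mod_cast hn
  have hnpos : (0 : ℝ) < n := by linarith
  have hsq : (0 : ℝ) < Real.sqrt n := Real.sqrt_pos.mpr hnpos
  have hn1 : (1 : ℝ) ≤ n - 1 := by linarith
  set δ : ℝ := η / Real.sqrt n with hδ_def
  have hδpos : 0 < δ := div_pos hη hsq
  -- from hfar : η² ≤ ∑ (μθ - 1/n)²
  have hsum : η ^ 2 ≤ ∑ θ, (μ θ - 1 / n) ^ 2 := by
    have h := hfar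
    unfold euclDist at h
    have hS : (0:ℝ) ≤ ∑ θ, (μ θ - 1 / n) ^ 2 :=
      Finset.sum_nonneg fun θ _ => sq_nonneg _
    nlinarith [Real.sq_sqrt hS, Real.sqrt_nonneg (∑ θ, (μ θ - 1 / n) ^ 2)]
  -- some θ with (μθ - 1/n)² ≥ η²/n
  have hsum' : ∑ _θ : Θ, (η ^ 2 / n) ≤ ∑ θ, (μ θ - 1 / n) ^ 2 := by
    rw [Finset.sum_const, Finset.card_univ, nsmul_eq_mul]
    rw [show ((Fintype.card Θ : ℝ)) * (η ^ 2 / n) = η ^ 2 by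
      rw [← hn_def]; field_simp]
    exact hsum
  obtain ⟨θ, _, hθ⟩ := Finset.exists_le_of_sum_le Finset.univ_nonempty hsum'
  have habs : δ ≤ |μ θ - 1 / n| := by
    have h1 : Real.sqrt (η ^ 2 / n) ≤ Real.sqrt ((μ θ - 1 / n) ^ 2) :=
      Real.sqrt_le_sqrt hθ
    rw [Real.sqrt_sq_eq_abs] at h1
    have h2 : Real.sqrt (η ^ 2 / n) = δ := by
      rw [hδ_def, Real.sqrt_div (sq_nonneg η), Real.sqrt_sq hη.le]
    rw [← h2]; exact h1
  have hgoal : δ / (n - 1) ≤ δ := by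
    rw [div_le_iff₀ (by linarith)]
    nlinarith
  rcases abs_cases (μ θ - 1 / n) with ⟨heq, _⟩ | ⟨heq, _⟩
  · -- μ θ - 1/n ≥ δ : some other coordinate must be small
    have hθbig : 1 / n + δ ≤ μ θ := by rw [heq] at habs; linarith
    have hcard_erase : (Finset.univ.erase θ).card = Fintype.card Θ - 1 := by
      rw [Finset.card_erase_of_mem (Finset.mem_univ θ), Finset.card_univ]
    have hcard_erase' : ((Finset.univ.erase θ).card : ℝ) = n - 1 := by
      rw [hcard_erase]
      have : 1 ≤ Fintype.card Θ := by omega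
      push_cast [Nat.cast_sub this]
      ring
    have hne : (Finset.univ.erase θ).Nonempty := by
      rw [← Finset.card_pos, hcard_erase]; omega
    have hsum_erase : ∑ θ' ∈ Finset.univ.erase θ, μ θ' = 1 - μ θ := by
      have := Finset.add_sum_erase Finset.univ μ (Finset.mem_univ θ)
      rw [hμ.2] at this; linarith
    have hsum_le : ∑ θ' ∈ Finset.univ.erase θ, μ θ'
        ≤ ∑ _θ' ∈ Finset.univ.erase θ, (1 / n - δ / (n - 1)) := by
      rw [hsum_erase, Finset.sum_const, nsmul_eq_mul, hcard_erase']
      have : (n - 1) * (1 / n - δ / (n - 1)) = 1 - 1 / n - δ := by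
        field_simp
      rw [this]
      have h1n : 1 / n + δ ≤ μ θ := hθbig
      linarith
    obtain ⟨θ', _, hθ'⟩ := Finset.exists_le_of_sum_le hne hsum_le
    have hdd : η / Real.sqrt n / (n - 1) = η / (Real.sqrt n * (n - 1)) := div_div _ _ _
    exact ⟨θ', by rw [← hdd, ← hδ_def]; exact hθ'⟩
  · -- μ θ ≤ 1/n - δ
    have h3 : μ θ ≤ 1 / n - δ := by rw [heq] at habs; linarith
    have hdd : η / Real.sqrt n / (n - 1) = η / (Real.sqrt n * (n - 1)) := div_div _ _ _
    exact ⟨θ, by rw [← hdd, ← hδ_def]; linarith [hgoal]⟩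

end Aux

/-- Under Assumption (A) there is a contract `(u, d)` that screens the uninformed Bob:
(i) every informed Bob accepts (either without learning, or via some affordable experiment);
(ii) the maxmin uninformed Bob gets at most `u − d/n < 0` from any mixed announcement. -/
theorem screening_contract_exists
    {Θ : Type} [Fintype Θ] (hn : 2 ≤ Fintype.card Θ)
    (ℰ : Set (Experiment Θ)) (C : Experiment Θ → (Θ → ℝ) → ℝ≥0∞)
    (hA : ∃ ε > (0 : ℝ), ∃ η > (0 : ℝ), ∃ T : ℝ, 0 ≤ T ∧
      ∀ μ : Θ → ℝ, IsDist μ →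
        euclDist μ (fun _ => 1 / (Fintype.card Θ : ℝ)) < η →
        ∃ E ∈ ℰ, Upsilon E μ > ε ∧ C E μ ≤ ENNReal.ofReal T) :
    ∃ u > (0 : ℝ), ∃ d > (0 : ℝ),
      (∀ μ : Θ → ℝ, IsDist μ →
        (0 ≤ u - d * ⨅ θ, μ θ) ∨
        (∃ E ∈ ℰ, C E μ ≠ ⊤ ∧
          0 ≤ u - d * (∑ s, ⨅ θ, μ θ * E.χ θ s) - (C E μ).toReal)) ∧
      (∀ σ : Θ → ℝ, IsDist σ →
        (⨅ θ, u - d * σ θ) ≤ u - d / (Fintype.card Θ : ℝ)) ∧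
      u - d / (Fintype.card Θ : ℝ) < 0 := by
  haveI : Nonempty Θ := Fintype.card_pos_iff.mp (by omega)
  obtain ⟨ε, hε, η, hη, T, hT, hA⟩ := hA
  set n : ℝ := (Fintype.card Θ : ℝ) with hn_def
  have hn2 : (2 : ℝ) ≤ n := by rw [hn_def]; exact_mod_cast hn
  have hnpos : (0 : ℝ) < n := by linarith
  have hsqn : (0 : ℝ) < Real.sqrt n := Real.sqrt_pos.mpr hnpos
  set c : ℝ := η / (Real.sqrt n * (n - 1)) with hc_def
  have hc : 0 < c := div_pos hη (by nlinarith)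
  set ε' : ℝ := min ε (min c (1 / (2 * n))) with hε'_def
  have hε' : 0 < ε' := lt_min hε (lt_min hc (by positivity))
  have hε'ε : ε' ≤ ε := min_le_left _ _
  have hε'c : ε' ≤ c := le_trans (min_le_right _ _) (min_le_left _ _)
  have hε'n : ε' ≤ 1 / (2 * n) := le_trans (min_le_right _ _) (min_le_right _ _)
  set d : ℝ := 2 * (T + 1) / ε' with hd_def
  have hd : 0 < d := div_pos (by linarith) hε'
  have hdε : d * ε' = 2 * (T + 1) := by
    rw [hd_def]; field_simp
  set u : ℝ := d * (1 / n - ε' / 2) with hu_def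
  have hun : 1 / n - ε' / 2 > 0 := by
    have : 1 / (2 * n) < 1 / n := by
      rw [div_lt_div_iff₀ (by linarith) hnpos]; nlinarith
    linarith
  have hu : 0 < u := mul_pos hd hun
  refine ⟨u, hu, d, hd, ?_, ?_, ?_⟩
  · -- (i)
    intro μ hμ
    by_cases hclose : euclDist μ (fun _ => 1 / n) < η
    · -- close to uniform: use the experiment
      obtain ⟨E, hE, hΥ, hC⟩ := hA μ hμ hclose
      refine Or.inr ⟨E, hE, ?_, ?_⟩
      · exact ne_top_of_le_ne_top ENNReal.ofReal_ne_top hC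
      · have htr : (C E μ).toReal ≤ T := ENNReal.toReal_le_of_le_ofReal hT hC
        have hinf : (⨅ θ, μ θ) ≤ 1 / n := by
          obtain ⟨θ, hθ⟩ := exists_le_inv_card hμ
          exact le_trans (ciInf_le_of_mem μ θ) hθ
        have hS : (∑ s, ⨅ θ, μ θ * E.χ θ s) = (⨅ θ, μ θ) - Upsilon E μ := by
          unfold Upsilon; ring
        have hSle : (∑ s, ⨅ θ, μ θ * E.χ θ s) ≤ 1 / n - ε' := by
          rw [hS]; linarith
        have hmul : d * (∑ s, ⨅ θ, μ θ * E.χ θ s) ≤ d * (1 / n - ε') :=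
          mul_le_mul_of_nonneg_left hSle hd.le
        have hkey : 2 * (u - d * (1 / n - ε')) = d * ε' := by rw [hu_def]; ring
        linarith only [hkey, hdε, hmul, htr, hT]
    · -- far from uniform: accept without learning
      left
      obtain ⟨θ, hθ⟩ := exists_small_of_far hn hμ hη (not_lt.mp hclose)
      have hinf : (⨅ θ', μ θ') ≤ 1 / n - c := le_trans (ciInf_le_of_mem μ θ) hθ
      have hmul : d * (⨅ θ', μ θ') ≤ d * (1 / n - c) :=
        mul_le_mul_of_nonneg_left hinf hd.le
      have hcε : d * (1 / n - c) ≤ d * (1 / n - ε') :=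
        mul_le_mul_of_nonneg_left (by linarith) hd.le
      have hkey : 2 * (u - d * (1 / n - ε')) = d * ε' := by rw [hu_def]; ring
      linarith only [hkey, hdε, hmul, hcε, hT]
  · -- (ii) first part
    intro σ hσ
    obtain ⟨θ, hθ⟩ := exists_ge_inv_card hσ
    calc (⨅ θ', u - d * σ θ') ≤ u - d * σ θ := ciInf_le_of_mem _ θ
      _ ≤ u - d / n := by
          have : d / n ≤ d * σ θ := by
            rw [div_eq_mul_one_div]
            exact mul_le_mul_of_nonneg_left hθ hd.le
          linarith
  · -- (ii) second part
    have : u - d / n = d * (- ε' / 2) - (d / n - d * (1/n)) := by rw [hu_def]; ring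
    have h0 : d / n = d * (1 / n) := by rw [div_eq_mul_one_div]
    nlinarith
end

section
/- Let M be a nonempty compact topological (metrizable) space of messages and t : M × {0, 1} → ℝ a continuous transfer function, and define the informed value function V(x) := max_{m ∈ M} ( x·t(m, 1) + (1 − x)·t(m, 0) ) for x ∈ [0, 1]. If V(x) ≥ 0 for every x ∈ [0, 1] (an informed expected-utility Bob accepts the contract no matter his prior), then there exists a Borel probability measure σ on M such that ∫_M t(m, θ) dσ(m) ≥ 0 for both θ ∈ {0, 1}; hence the maxmin-evaluating uninformed Bob, who evaluates a mixed message σ by min_θ ∫ t(m, θ) dσ(m), also weakly prefers to accept. -/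
open MeasureTheory
open scoped NNReal ENNReal

/-- For a general contract `(M, t)` with two states: if the informed expected-utility Bob's
value function `V(x) = max_m (x·t(m,1) + (1−x)·t(m,0))` is nonnegative on all of `[0,1]`,
then there is a mixed message (a Borel probability measure `σ` on `M`) whose expected
transfer is nonnegative in both states, so the maxmin uninformed Bob also weakly accepts. -/
theorem general_contract_cannot_screen
    {M : Type} [TopologicalSpace M] [CompactSpace M] [Nonempty M]
    [TopologicalSpace.MetrizableSpace M] [MeasurableSpace M] [BorelSpace M]
    (t : M → Fin 2 → ℝ) (ht : ∀ θ : Fin 2, Continuous fun m => t m θ)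
    (hV : ∀ x ∈ Set.Icc (0 : ℝ) 1, 0 ≤ ⨆ m, (x * t m 1 + (1 - x) * t m 0)) :
    ∃ σ : Measure M, IsProbabilityMeasure σ ∧ ∀ θ : Fin 2, 0 ≤ ∫ m, t m θ ∂σ := by
  classical
  have hT2 : TopologicalSpace.MetrizableSpace M := inferInstance
  letI := TopologicalSpace.metrizableSpaceMetric M
  -- maximizer existence: for each x there is m with nonneg payoff
  have hmax : ∀ x ∈ Set.Icc (0:ℝ) 1, ∃ m, 0 ≤ x * t m 1 + (1-x) * t m 0 := by
    intro x hx
    have hc : Continuous fun m => x * t m 1 + (1-x) * t m 0 :=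
      ((continuous_const.mul (ht 1)).add (continuous_const.mul (ht 0)))
    obtain ⟨m, -, hm⟩ := isCompact_univ.exists_isMaxOn Set.univ_nonempty hc.continuousOn
    exact ⟨m, le_trans (hV x hx) (ciSup_le fun m' => hm (Set.mem_univ m'))⟩
  -- the two closed sets
  let K : Fin 2 → Set (ℝ × M) := fun θ =>
    {p : ℝ × M | p.1 ∈ Set.Icc (0:ℝ) 1 ∧ 0 ≤ p.1 * t p.2 1 + (1-p.1) * t p.2 0 ∧ 0 ≤ t p.2 θ}
  have hKclosed : ∀ θ, IsClosed (K θ) := by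
    intro θ
    have h1 : IsClosed {p : ℝ × M | p.1 ∈ Set.Icc (0:ℝ) 1} :=
      (isClosed_Icc).preimage continuous_fst
    have h2 : IsClosed {p : ℝ × M | 0 ≤ p.1 * t p.2 1 + (1-p.1) * t p.2 0} :=
      isClosed_le continuous_const
        ((continuous_fst.mul ((ht 1).comp continuous_snd)).add
          ((continuous_const.sub continuous_fst).mul ((ht 0).comp continuous_snd)))
    have h3 : IsClosed {p : ℝ × M | 0 ≤ t p.2 θ} :=
      isClosed_le continuous_const ((ht θ).comp continuous_snd)
    have : K θ = {p : ℝ × M | p.1 ∈ Set.Icc (0:ℝ) 1} ∩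
        ({p : ℝ × M | 0 ≤ p.1 * t p.2 1 + (1-p.1) * t p.2 0} ∩ {p : ℝ × M | 0 ≤ t p.2 θ}) := rfl
    rw [this]
    exact h1.inter (h2.inter h3)
  have hKcompact : ∀ θ, IsCompact (K θ) := by
    intro θ
    refine IsCompact.of_isClosed_subset ((isCompact_Icc (a := (0:ℝ)) (b := 1)).prod isCompact_univ) (hKclosed θ) ?_
    intro p hp; exact ⟨hp.1, Set.mem_univ _⟩
  let B : Fin 2 → Set ℝ := fun θ => Prod.fst '' K θ
  have hBclosed : ∀ θ, IsClosed (B θ) := fun θ =>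
    ((hKcompact θ).image continuous_fst).isClosed
  have hcover : Set.Icc (0:ℝ) 1 ⊆ B 0 ∪ B 1 := by
    intro x hx
    obtain ⟨m, hm⟩ := hmax x hx
    rcases le_or_gt 0 (t m 0) with h0 | h0
    · exact Or.inl ⟨(x, m), ⟨hx, hm, h0⟩, rfl⟩
    rcases le_or_gt 0 (t m 1) with h1 | h1
    · exact Or.inr ⟨(x, m), ⟨hx, hm, h1⟩, rfl⟩
    exfalso
    obtain ⟨hx0, hx1⟩ := hx
    nlinarith [mul_nonneg hx0 (le_of_lt (neg_pos.mpr h1)),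
      mul_nonneg (sub_nonneg.mpr hx1) (le_of_lt (neg_pos.mpr h0))]
  have hB0ne : (Set.Icc (0:ℝ) 1 ∩ B 0).Nonempty := by
    obtain ⟨m, hm⟩ := hmax 0 (by constructor <;> norm_num)
    refine ⟨0, by constructor <;> norm_num, (0, m), ⟨by constructor <;> norm_num, hm, ?_⟩, rfl⟩
    nlinarith
  have hB1ne : (Set.Icc (0:ℝ) 1 ∩ B 1).Nonempty := by
    obtain ⟨m, hm⟩ := hmax 1 (by constructor <;> norm_num)
    refine ⟨1, by constructor <;> norm_num, (1, m), ⟨by constructor <;> norm_num, hm, ?_⟩, rfl⟩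
    nlinarith
  obtain ⟨x, hxIcc, hx0, hx1⟩ := isPreconnected_closed_iff.1 isPreconnected_Icc (B 0) (B 1)
    (hBclosed 0) (hBclosed 1) hcover hB0ne hB1ne
  obtain ⟨⟨y0, m₀⟩, ⟨-, hm₀v, hm₀0⟩, hfst0⟩ := hx0
  obtain ⟨⟨y1, m₁⟩, ⟨-, hm₁v, hm₁1⟩, hfst1⟩ := hx1
  simp only at hfst0 hfst1 hm₀v hm₁v
  rw [hfst0] at hm₀v
  rw [hfst1] at hm₁v
  -- easy cases: a single dirac works
  rcases le_or_gt 0 (t m₀ 1) with hb | hb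
  · refine ⟨Measure.dirac m₀, inferInstance, fun θ => ?_⟩
    rw [integral_dirac]
    fin_cases θ
    · exact hm₀0
    · exact hb
  rcases le_or_gt 0 (t m₁ 0) with hcc | hcc
  · refine ⟨Measure.dirac m₁, inferInstance, fun θ => ?_⟩
    rw [integral_dirac]
    fin_cases θ
    · exact hcc
    · exact hm₁1
  -- mixture case
  obtain ⟨hx0le, hx1le⟩ := hxIcc
  set a := t m₀ 0 with ha
  set b := t m₀ 1 with hbdef
  set c := t m₁ 0 with hcdef
  set d := t m₁ 1 with hddef
  have hxpos : 0 < x := by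
    rcases lt_or_eq_of_le hx0le with h | h
    · exact h
    · exfalso; rw [← h] at hm₁v; simp at hm₁v; linarith
  have hxlt : x < 1 := by
    rcases lt_or_eq_of_le hx1le with h | h
    · exact h
    · exfalso; rw [h] at hm₀v; simp at hm₀v; linarith
  have hapos : 0 < a := by nlinarith
  have hac : 0 < a - c := by linarith
  have hadbc : b * c ≤ a * d := by nlinarith
  set lam : ℝ := (-c) / (a - c) with hlam
  have hlam0 : 0 ≤ lam := div_nonneg (by linarith) (le_of_lt hac)
  have hlam1 : lam ≤ 1 := by
    rw [hlam, div_le_one hac]; linarith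
  have key0 : lam * a + (1 - lam) * c = 0 := by
    rw [hlam]; field_simp; ring
  have key1 : 0 ≤ lam * b + (1 - lam) * d := by
    have : lam * b + (1 - lam) * d = ((-c) * b + (a - c - (-c)) * d) / (a - c) := by
      rw [hlam]; field_simp
    rw [this]
    apply div_nonneg _ (le_of_lt hac)
    nlinarith
  refine ⟨(Real.toNNReal lam : ℝ≥0) • Measure.dirac m₀
      + (Real.toNNReal (1 - lam) : ℝ≥0) • Measure.dirac m₁, ?_, ?_⟩
  · constructor
    rw [Measure.add_apply, Measure.smul_apply, Measure.smul_apply,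
      Measure.dirac_apply_of_mem (Set.mem_univ _), Measure.dirac_apply_of_mem (Set.mem_univ _)]
    rw [ENNReal.smul_def, ENNReal.smul_def, smul_eq_mul, smul_eq_mul, mul_one, mul_one,
      ← ENNReal.coe_add, ← Real.toNNReal_add hlam0 (by linarith)]
    norm_num
  · intro θ
    have hint : ∀ (m : M) (cc : ℝ≥0), Integrable (fun m' => t m' θ)
        ((cc : ℝ≥0) • Measure.dirac m) := by
      intro m cc
      have hsupp : HasCompactSupport fun m' => t m' θ :=
        IsClosed.isCompact (isClosed_tsupport _)
      exact (ht θ).integrable_of_hasCompactSupport hsupp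
    rw [integral_add_measure (hint m₀ _) (hint m₁ _),
      integral_smul_nnreal_measure, integral_smul_nnreal_measure,
      integral_dirac, integral_dirac]
    simp only [NNReal.smul_def, smul_eq_mul]
    rw [Real.coe_toNNReal _ hlam0, Real.coe_toNNReal _ (by linarith : (0:ℝ) ≤ 1 - lam)]
    fin_cases θ
    · exact le_of_eq key0.symm
    · exact key1
end

section
/- Let c : [0,1] → ℝ be convex, continuous, and differentiable at 1/2, and let d > 0, κ > 0, and set u = d/2. Define, for each μ ∈ [0,1], V*(μ) := sup over finitely supported probability distributions F on [0,1] with mean μ of ( u − d·E_F[min{x, 1−x}] − κ·( E_F[c(x)] − c(μ) ) ). Then V*(μ) > 0 for every μ ∈ [0,1], and moreover inf_{μ ∈ [0,1]} V*(μ) > 0; consequently there exists ε > 0 such that the contract (u − ε, d) satisfies (u − ε) − d/2 < 0 (so the uninformed maxmin Bob rejects, since his best mixed announcement yields (u − ε) − d/2) while the informed Bob's value (u − ε supplemented by optimal learning) is strictly positive at every prior μ ∈ [0,1]. -/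
open scoped BigOperators
open Set Filter Topology

/-- The informed Bob's value at prior `μ` under contract `(u, d)` with posterior-separable
cost `κ·(E_F[c] − c(μ))`: the supremum over finitely supported Bayes-plausible
distributions of posteriors `F` (support points `x i ∈ [0,1]`, weights `p i`, mean `μ`)
of `u − d·E_F[min{x, 1−x}] − κ·(E_F[c(x)] − c(μ))`. -/
noncomputable def informedValue (u d κ : ℝ) (c : ℝ → ℝ) (μ : ℝ) : ℝ :=
  sSup {v : ℝ | ∃ (k : ℕ) (p x : Fin k → ℝ),
    (∀ i, 0 ≤ p i) ∧ (∑ i, p i) = 1 ∧ (∀ i, x i ∈ Set.Icc (0 : ℝ) 1) ∧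
    (∑ i, p i * x i) = μ ∧
    v = u - d * (∑ i, p i * min (x i) (1 - x i)) -
        κ * ((∑ i, p i * c (x i)) - c μ)}

private def mySet (u d κ : ℝ) (c : ℝ → ℝ) (μ : ℝ) : Set ℝ :=
  {v : ℝ | ∃ (k : ℕ) (p x : Fin k → ℝ),
    (∀ i, 0 ≤ p i) ∧ (∑ i, p i) = 1 ∧ (∀ i, x i ∈ Set.Icc (0 : ℝ) 1) ∧
    (∑ i, p i * x i) = μ ∧
    v = u - d * (∑ i, p i * min (x i) (1 - x i)) -
        κ * ((∑ i, p i * c (x i)) - c μ)}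

private lemma informedValue_eq (u d κ : ℝ) (c : ℝ → ℝ) (μ : ℝ) :
    informedValue u d κ c μ = sSup (mySet u d κ c μ) := rfl

private lemma tangent_le {c : ℝ → ℝ} (hc : ConvexOn ℝ (Set.Icc (0:ℝ) 1) c)
    (hdiff : DifferentiableAt ℝ c (1/2)) {y : ℝ} (hy : y ∈ Set.Icc (0:ℝ) 1) :
    c (1/2) + deriv c (1/2) * (y - 1/2) ≤ c y := by
  have hhalf : (1/2 : ℝ) ∈ Set.Icc (0:ℝ) 1 := by norm_num
  have hds : Tendsto (slope c (1/2)) (𝓝[≠] (1/2:ℝ)) (𝓝 (deriv c (1/2))) :=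
    hasDerivAt_iff_tendsto_slope.mp hdiff.hasDerivAt
  rcases lt_trichotomy y (1/2) with h | h | h
  · have key : slope c (1/2) y ≤ deriv c (1/2) := by
      have ht : Tendsto (slope c (1/2)) (𝓝[<] (1/2:ℝ)) (𝓝 (deriv c (1/2))) :=
        hds.mono_left (nhdsWithin_mono _ (fun z hz => ne_of_lt hz))
      refine ge_of_tendsto ht ?_
      filter_upwards [Ioo_mem_nhdsLT_of_mem ⟨h, le_refl _⟩] with z hz
      have hz01 : z ∈ Set.Icc (0:ℝ) 1 := ⟨le_trans hy.1 hz.1.le, by linarith [hz.2]⟩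
      have := hc.secant_mono hhalf hy hz01 (by linarith : y ≠ 1/2) (by linarith [hz.2] : z ≠ 1/2) hz.1.le
      simpa [slope_def_field, div_eq_iff] using this
    have hy' : y - 1/2 < 0 := by linarith
    have hs : slope c (1/2) y * (y - 1/2) = c y - c (1/2) := by
      rw [slope_def_field]
      rw [div_mul_eq_mul_div, mul_div_assoc, div_self (by linarith : y - 1/2 ≠ 0), mul_one]
    nlinarith [mul_le_mul_of_nonpos_right key hy'.le]
  · simp [h]
  · have key : deriv c (1/2) ≤ slope c (1/2) y := by
      have ht : Tendsto (slope c (1/2)) (𝓝[>] (1/2:ℝ)) (𝓝 (deriv c (1/2))) :=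
        hds.mono_left (nhdsWithin_mono _ (fun z hz => ne_of_gt hz))
      refine le_of_tendsto ht ?_
      filter_upwards [Ioo_mem_nhdsGT_of_mem ⟨le_refl _, h⟩] with z hz
      have hz01 : z ∈ Set.Icc (0:ℝ) 1 := ⟨by linarith [hz.1], le_trans hz.2.le hy.2⟩
      have := hc.secant_mono hhalf hz01 hy (by linarith [hz.1] : z ≠ 1/2) (by linarith : y ≠ 1/2) hz.2.le
      simpa [slope_def_field] using this
    have hy' : (0:ℝ) < y - 1/2 := by linarith
    have hs : slope c (1/2) y * (y - 1/2) = c y - c (1/2) := by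
      rw [slope_def_field]
      rw [div_mul_eq_mul_div, mul_div_assoc, div_self (by linarith : y - 1/2 ≠ 0), mul_one]
    nlinarith [mul_le_mul_of_nonneg_right key hy'.le]

private lemma mem_le {u d κ : ℝ} {c : ℝ → ℝ} (hc : ConvexOn ℝ (Set.Icc (0:ℝ) 1) c)
    (hd : 0 ≤ d) (hκ : 0 ≤ κ) {μ v : ℝ} (hv : v ∈ mySet u d κ c μ) : v ≤ u := by
  obtain ⟨k, p, x, h0, h1, hx, hmean, rfl⟩ := hv
  have S1 : 0 ≤ ∑ i, p i * min (x i) (1 - x i) := by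
    apply Finset.sum_nonneg
    intro i _
    exact mul_nonneg (h0 i) (le_min (hx i).1 (by linarith [(hx i).2]))
  have S2 : c μ ≤ ∑ i, p i * c (x i) := by
    have := hc.map_sum_le (t := Finset.univ) (w := p) (p := x)
      (fun i _ => h0 i) h1 (fun i _ => hx i)
    simp only [smul_eq_mul] at this
    rwa [hmean] at this
  nlinarith [mul_nonneg hd S1, mul_nonneg hκ (by linarith : (0:ℝ) ≤ (∑ i, p i * c (x i)) - c μ)]

private lemma le_informed {u d κ : ℝ} {c : ℝ → ℝ} (hc : ConvexOn ℝ (Set.Icc (0:ℝ) 1) c)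
    (hd : 0 ≤ d) (hκ : 0 ≤ κ) {μ v : ℝ} (hv : v ∈ mySet u d κ c μ) :
    v ≤ informedValue u d κ c μ := by
  rw [informedValue_eq]
  exact le_csSup ⟨u, fun _ hw => mem_le hc hd hκ hw⟩ hv

private lemma wit1 (u d κ : ℝ) (c : ℝ → ℝ) {μ : ℝ} (hμ : μ ∈ Set.Icc (0:ℝ) 1) :
    u - d * min μ (1 - μ) ∈ mySet u d κ c μ := by
  refine ⟨1, fun _ => 1, fun _ => μ, fun _ => zero_le_one, by simp, fun _ => hμ, by simp, by simp⟩

private lemma wit2 (u d κ : ℝ) (c : ℝ → ℝ) {μ δ : ℝ} (hδ : 0 < δ) (hδ4 : δ ≤ 1/4)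
    (hμ : |μ - 1/2| ≤ δ) :
    u - d * (1/2 - δ) - κ * (((1 - (μ - (1/2 - δ))/(2*δ)) * c (1/2 - δ)
      + (μ - (1/2 - δ))/(2*δ) * c (1/2 + δ)) - c μ) ∈ mySet u d κ c μ := by
  set q : ℝ := (μ - (1/2 - δ))/(2*δ) with hq
  have habs := abs_le.mp hμ
  have hq0 : 0 ≤ q := by
    apply div_nonneg _ (by linarith)
    linarith [habs.1]
  have hq1 : q ≤ 1 := by
    rw [div_le_one (by linarith)]
    linarith [habs.2]
  refine ⟨2, ![1 - q, q], ![1/2 - δ, 1/2 + δ], ?_, ?_, ?_, ?_, ?_⟩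
  · intro i; fin_cases i <;> simp <;> linarith
  · simp [Fin.sum_univ_two]
  · intro i; fin_cases i <;> constructor <;> simp <;> linarith
  · rw [Fin.sum_univ_two]
    simp only [Matrix.cons_val_zero, Matrix.cons_val_one, Matrix.head_cons]
    have h2δ : (2*δ) ≠ 0 := by positivity
    field_simp [hq]
    have hq2 : q * (2*δ) = μ - (1/2 - δ) := by rw [hq]; exact div_mul_cancel₀ _ h2δ
    linear_combination 2 * hq2
  · rw [Fin.sum_univ_two, Fin.sum_univ_two]
    simp only [Matrix.cons_val_zero, Matrix.cons_val_one, Matrix.head_cons]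
    have m1 : min (1/2 - δ) (1 - (1/2 - δ)) = 1/2 - δ := by
      apply min_eq_left; linarith
    have m2 : min (1/2 + δ) (1 - (1/2 + δ)) = 1/2 - δ := by
      rw [show (1 - (1/2 + δ) : ℝ) = 1/2 - δ by ring]
      apply min_eq_right; linarith
    rw [m1, m2]
    ring_nf

set_option maxHeartbeats 1600000 in
private lemma main_bound {c : ℝ → ℝ} (hc : ConvexOn ℝ (Set.Icc (0 : ℝ) 1) c)
    (hdiff : DifferentiableAt ℝ c (1 / 2))
    {d κ : ℝ} (hd : 0 < d) (hκ : 0 < κ) :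
    ∃ δ > (0:ℝ), δ ≤ 1/4 ∧ ∀ u' : ℝ, ∀ μ ∈ Set.Icc (0:ℝ) 1,
      u' - d/2 + d*δ/2 ≤ informedValue u' d κ c μ := by
  -- choose δ using differentiability (little-o)
  set ε : ℝ := d / (4 * κ) with hε
  have hεpos : 0 < ε := by positivity
  have hlo : (fun y => c y - c (1/2) - (y - 1/2) • deriv c (1/2)) =o[𝓝 (1/2:ℝ)]
      (fun y => y - 1/2) := hasDerivAt_iff_isLittleO.mp hdiff.hasDerivAt
  have hev := hlo.def hεpos
  rw [Metric.eventually_nhds_iff] at hev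
  obtain ⟨η, hη, hball⟩ := hev
  set δ : ℝ := min (η / 2) (1 / 4) with hδdef
  have hδpos : 0 < δ := by positivity
  have hδ4 : δ ≤ 1/4 := min_le_right _ _
  have hδη : δ < η := lt_of_le_of_lt (min_le_left _ _) (by linarith)
  set A : ℝ := c (1/2 + δ) - c (1/2) - δ * deriv c (1/2) with hAdef
  set B : ℝ := c (1/2 - δ) - c (1/2) + δ * deriv c (1/2) with hBdef
  have hA := hball (y := 1/2 + δ) (by simpa [abs_of_pos hδpos] using hδη)
  have hB := hball (y := 1/2 - δ) (by simpa [abs_of_pos hδpos] using hδη)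
  simp only [Real.norm_eq_abs, smul_eq_mul] at hA hB
  have hA' : A ≤ ε * δ := by
    rw [show (1/2 + δ - 1/2 : ℝ) = δ by ring, abs_of_pos hδpos] at hA
    exact le_trans (le_abs_self _) hA
  have hB' : B ≤ ε * δ := by
    rw [show (1/2 - δ - 1/2 : ℝ) = -δ by ring, abs_neg, abs_of_pos hδpos] at hB
    have := (abs_le.mp hB).2
    rw [hBdef]; linarith
  have hmemp : (1/2 + δ : ℝ) ∈ Set.Icc (0:ℝ) 1 := by constructor <;> [linarith; linarith]
  have hmemm : (1/2 - δ : ℝ) ∈ Set.Icc (0:ℝ) 1 := by constructor <;> [linarith; linarith]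
  have hA0 : 0 ≤ A := by
    have := tangent_le hc hdiff hmemp
    rw [hAdef]; nlinarith [this]
  have hB0 : 0 ≤ B := by
    have := tangent_le hc hdiff hmemm
    rw [hBdef]; nlinarith [this]
  have hκε : κ * ε = d / 4 := by rw [hε]; field_simp
  clear_value ε δ A B
  refine ⟨δ, hδpos, hδ4, ?_⟩
  intro u' μ hμ
  by_cases hfar : δ ≤ |μ - 1/2|
  · -- no learning
    have hmin : min μ (1 - μ) ≤ 1/2 - δ := by
      rcases le_abs.mp hfar with h | h
      · exact le_trans (min_le_right _ _) (by linarith)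
      · exact le_trans (min_le_left _ _) (by linarith)
    have := le_informed hc hd.le hκ.le (wit1 u' d κ c hμ)
    have hv : u' - d/2 + d*δ/2 ≤ u' - d * min μ (1 - μ) := by
      nlinarith [mul_le_mul_of_nonneg_left hmin hd.le]
    linarith
  · -- binary experiment at 1/2 ± δ
    push_neg at hfar
    obtain ⟨q, hq⟩ : ∃ q : ℝ, q = (μ - (1/2 - δ))/(2*δ) := ⟨_, rfl⟩
    have habs := abs_le.mp hfar.le
    have hq0 : 0 ≤ q := by
      rw [hq]
      apply div_nonneg _ (by linarith)
      linarith [habs.1]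
    have hq1 : q ≤ 1 := by
      rw [hq, div_le_one (by linarith)]
      linarith [habs.2]
    have hqδ : q * (2*δ) = μ - 1/2 + δ := by
      rw [hq, div_mul_cancel₀ _ (by positivity : (2*δ:ℝ) ≠ 0)]
      ring
    have hcost : ((1 - q) * c (1/2 - δ) + q * c (1/2 + δ)) - c μ ≤ A + B := by
      have htan := tangent_le hc hdiff hμ
      have hiden : ((1 - q) * c (1/2 - δ) + q * c (1/2 + δ))
          - (c (1/2) + deriv c (1/2) * (μ - 1/2)) = (1 - q) * B + q * A := by
        rw [hAdef, hBdef]; linear_combination (deriv c (1/2)) * hqδ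
      have e1 : q * A ≤ A := mul_le_of_le_one_left hA0 hq1
      have e2 : (1 - q) * B ≤ B := mul_le_of_le_one_left hB0 (by linarith)
      linarith [hiden, htan, e1, e2]
    have hmem := wit2 u' d κ c hδpos hδ4 hfar.le
    rw [← hq] at hmem
    have hval := le_informed hc hd.le hκ.le hmem
    have hcκ : κ * (((1 - q) * c (1/2 - δ) + q * c (1/2 + δ)) - c μ) ≤ d * δ / 2 := by
      have h1 : κ * (((1 - q) * c (1/2 - δ) + q * c (1/2 + δ)) - c μ) ≤ κ * (A + B) :=
        mul_le_mul_of_nonneg_left hcost hκ.le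
      have h2 : κ * (A + B) ≤ κ * (2 * (ε * δ)) :=
        mul_le_mul_of_nonneg_left (by linarith) hκ.le
      have h3 : κ * (2 * (ε * δ)) = d * δ / 2 := by linear_combination (2 * δ) * hκε
      linarith [h1, h2, h3]
    linarith

/-- With `u = d/2` the informed value is strictly positive at every prior, indeed bounded
below by some `b > 0` uniformly in the prior; hence for some `ε > 0` the contract
`(u − ε, d)` gives the maxmin uninformed Bob `(u − ε) − d/2 < 0` (his best mixed
announcement) while the informed value stays strictly positive at every prior. -/
theorem posterior_separable_screening
    (c : ℝ → ℝ) (hc : ConvexOn ℝ (Set.Icc (0 : ℝ) 1) c)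
    (hcont : ContinuousOn c (Set.Icc (0 : ℝ) 1))
    (hdiff : DifferentiableAt ℝ c (1 / 2))
    (d κ u : ℝ) (hd : 0 < d) (hκ : 0 < κ) (hu : u = d / 2) :
    (∀ μ ∈ Set.Icc (0 : ℝ) 1, 0 < informedValue u d κ c μ) ∧
    (∃ b > (0 : ℝ), ∀ μ ∈ Set.Icc (0 : ℝ) 1, b ≤ informedValue u d κ c μ) ∧
    (∃ ε > (0 : ℝ), (u - ε) - d / 2 < 0 ∧
      ∀ μ ∈ Set.Icc (0 : ℝ) 1, 0 < informedValue (u - ε) d κ c μ) := by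
  obtain ⟨δ, hδpos, hδ4, hmain⟩ := main_bound hc hdiff hd hκ
  have hb : ∀ μ ∈ Set.Icc (0:ℝ) 1, d * δ / 2 ≤ informedValue u d κ c μ := by
    intro μ hμ
    have := hmain u μ hμ
    rw [hu] at this ⊢
    linarith
  have hbpos : 0 < d * δ / 2 := by positivity
  refine ⟨fun μ hμ => lt_of_lt_of_le hbpos (hb μ hμ), ⟨d * δ / 2, hbpos, hb⟩, ?_⟩
  refine ⟨d * δ / 4, by positivity, by rw [hu]; linarith, ?_⟩
  intro μ hμ
  have := hmain (u - d * δ / 4) μ hμ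
  have h2 : (0:ℝ) < u - d * δ / 4 - d/2 + d*δ/2 := by rw [hu]; linarith
  linarith
end

section
/- Let Θ be a finite set with n := |Θ| ≥ 2, let ρ ∈ Δ(Θ) with ρ(θ) > 0 for all θ, let 𝓔 be a set of experiments, and let C : 𝓔 × Δ(Θ) → [0,∞]. Suppose Assumption (A') holds: there exist ε > 0, η > 0 and T ≥ 0 such that for every μ ∈ Δ(Θ) with ‖μ − ρ‖ < η there exists E_μ = (S, χ) ∈ 𝓔 with Υ^ρ(E_μ, μ) := min_θ (μ(θ)/ρ(θ)) − Σ_{s∈S} min_θ ( μ(θ)·χ(θ)(s)/ρ(θ) ) > ε and C(E_μ, μ) ≤ T. Then there exist u > 0, κ > 0 and the generalized contract with d(θ) := κ/ρ(θ) such that: (i) for every μ ∈ Δ(Θ), max( u − min_θ μ(θ)·d(θ), sup_{E=(S,χ)∈𝓔} ( u − Σ_{s∈S} min_θ ( μ(θ)·χ(θ)(s)·d(θ) ) − C(E, μ) ) ) ≥ 0, so every informed Bob accepts; and (ii) u − κ < 0, so the subjective-expected-utility uninformed Bob with prior ρ, whose best payoff is max_θ ( u − ρ(θ)·d(θ) )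 = u − κ, strictly prefers to reject. -/
open scoped BigOperators ENNReal

/-- The `ρ`-weighted value of learning:
`Υ^ρ(E, μ) = min_θ (μ(θ)/ρ(θ)) − Σ_s min_θ (μ(θ)·χ(θ)(s)/ρ(θ))`. -/
noncomputable def UpsilonRho {Θ : Type} [Fintype Θ] (ρ : Θ → ℝ)
    (E : Experiment Θ) (μ : Θ → ℝ) : ℝ :=
  (⨅ θ, μ θ / ρ θ) - ∑ s, ⨅ θ, μ θ * E.χ θ s / ρ θ

section Helpers

variable {Θ : Type} [Fintype Θ] [Nonempty Θ]

lemma fiInf_le (f : Θ → ℝ) (θ : Θ) : (⨅ x, f x) ≤ f θ :=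
  ciInf_le (Set.Finite.bddBelow (Set.finite_range f)) θ

lemma iInf_eq_min (f : Θ → ℝ) (θ₀ : Θ) (h : ∀ θ, f θ₀ ≤ f θ) : (⨅ x, f x) = f θ₀ :=
  le_antisymm (fiInf_le f θ₀) (le_ciInf h)

lemma mul_fiInf (c : ℝ) (hc : 0 ≤ c) (f : Θ → ℝ) : (⨅ x, c * f x) = c * ⨅ x, f x := by
  obtain ⟨θ₀, h⟩ := Finite.exists_min f
  rw [iInf_eq_min f θ₀ h,
    iInf_eq_min (fun x => c * f x) θ₀ (fun θ => mul_le_mul_of_nonneg_left (h θ) hc)]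

/-- If `μ(θ) > (1-c)ρ(θ)` for all `θ`, then `μ` is close to `ρ`. -/
lemma dist_lt_of_ratio_big (μ ρ : Θ → ℝ) (hμ : IsDist μ) (hρ : IsDist ρ)
    (hρpos : ∀ θ, 0 < ρ θ) (c : ℝ) (hc : 0 < c)
    (h : ∀ θ, (1 - c) * ρ θ < μ θ) :
    euclDist μ ρ < Real.sqrt (Fintype.card Θ) * c := by
  classical
  have hρle1 : ∀ θ, ρ θ ≤ 1 := by
    intro θ
    calc ρ θ ≤ ∑ θ', ρ θ' := Finset.single_le_sum (fun θ' _ => (hρpos θ').le) (Finset.mem_univ θ)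
    _ = 1 := hρ.2
  have hsq : ∀ θ, (μ θ - ρ θ) ^ 2 < c ^ 2 := by
    intro θ
    have hlow : -c < μ θ - ρ θ := by
      have h1 := h θ
      have h2 : c * ρ θ ≤ c := by nlinarith [hρle1 θ, (hρpos θ).le]
      nlinarith
    have hhigh : μ θ - ρ θ < c := by
      have hsum : ∑ θ' ∈ Finset.univ.erase θ, (1 - c) * ρ θ'
          ≤ ∑ θ' ∈ Finset.univ.erase θ, μ θ' :=
        Finset.sum_le_sum fun θ' _ => (h θ').le
      have hμe : ∑ θ' ∈ Finset.univ.erase θ, μ θ' = 1 - μ θ := by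
        rw [Finset.sum_erase_eq_sub (Finset.mem_univ θ), hμ.2]
      have hρe : ∑ θ' ∈ Finset.univ.erase θ, ρ θ' = 1 - ρ θ := by
        rw [Finset.sum_erase_eq_sub (Finset.mem_univ θ), hρ.2]
      rw [← Finset.mul_sum, hρe, hμe] at hsum
      nlinarith [hρpos θ]
    exact sq_lt_sq' hlow hhigh
  have hsum : ∑ θ, (μ θ - ρ θ) ^ 2 < ∑ _θ : Θ, c ^ 2 :=
    Finset.sum_lt_sum_of_nonempty Finset.univ_nonempty fun θ _ => hsq θ
  rw [Finset.sum_const, Finset.card_univ, nsmul_eq_mul] at hsum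
  have : euclDist μ ρ < Real.sqrt ((Fintype.card Θ : ℝ) * c ^ 2) := by
    unfold euclDist
    exact Real.sqrt_lt_sqrt (Finset.sum_nonneg fun θ _ => sq_nonneg _) hsum
  rwa [Real.sqrt_mul (by positivity), Real.sqrt_sq hc.le] at this

lemma fiInf_ratio_le_one (μ ρ : Θ → ℝ) (hμ : IsDist μ) (hρ : IsDist ρ)
    (hρpos : ∀ θ, 0 < ρ θ) : (⨅ θ, μ θ / ρ θ) ≤ 1 := by
  obtain ⟨θ, hθ⟩ : ∃ θ, μ θ ≤ ρ θ := by
    by_contra hcon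
    push_neg at hcon
    have : ∑ θ, ρ θ < ∑ θ, μ θ :=
      Finset.sum_lt_sum_of_nonempty Finset.univ_nonempty fun θ _ => hcon θ
    rw [hμ.2, hρ.2] at this
    exact lt_irrefl 1 this
  calc (⨅ θ, μ θ / ρ θ) ≤ μ θ / ρ θ := fiInf_le _ θ
  _ ≤ 1 := (div_le_one (hρpos θ)).mpr hθ

end Helpers

/-- Under Assumption (A') there is a generalized contract `(u, d(·))` with
`d(θ) = κ/ρ(θ)` that screens the SEU uninformed Bob with prior `ρ`:
(i) every informed Bob accepts (without learning, or via an affordable experiment);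
(ii) the uninformed Bob's best payoff is `u − κ < 0`, so he strictly rejects. -/
theorem generalized_contract_screens
    {Θ : Type} [Fintype Θ] (hn : 2 ≤ Fintype.card Θ)
    (ρ : Θ → ℝ) (hρ : IsDist ρ) (hρpos : ∀ θ, 0 < ρ θ)
    (ℰ : Set (Experiment Θ)) (C : Experiment Θ → (Θ → ℝ) → ℝ≥0∞)
    (hA : ∃ ε > (0 : ℝ), ∃ η > (0 : ℝ), ∃ T : ℝ, 0 ≤ T ∧
      ∀ μ : Θ → ℝ, IsDist μ → euclDist μ ρ < η →
        ∃ E ∈ ℰ, UpsilonRho ρ E μ > ε ∧ C E μ ≤ ENNReal.ofReal T) :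
    ∃ u > (0 : ℝ), ∃ κ > (0 : ℝ),
      (∀ μ : Θ → ℝ, IsDist μ →
        (0 ≤ u - ⨅ θ, μ θ * (κ / ρ θ)) ∨
        (∃ E ∈ ℰ, C E μ ≠ ⊤ ∧
          0 ≤ u - (∑ s, ⨅ θ, μ θ * E.χ θ s * (κ / ρ θ)) - (C E μ).toReal)) ∧
      (⨆ θ, u - ρ θ * (κ / ρ θ)) = u - κ ∧ u - κ < 0 := by
  haveI : Nonempty Θ := Fintype.card_pos_iff.mp (by omega)
  obtain ⟨ε, hε, η, hη, T, hT, hA'⟩ := hA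
  set sn : ℝ := Real.sqrt (Fintype.card Θ) with hsn_def
  have hsn : 0 < sn := Real.sqrt_pos.mpr (by positivity)
  set c : ℝ := min (η / sn) (1 / 2) with hc_def
  have hc : 0 < c := lt_min (by positivity) (by norm_num)
  have hsnc : sn * c ≤ η := by
    have : c ≤ η / sn := min_le_left _ _
    calc sn * c ≤ sn * (η / sn) := by nlinarith
    _ = η := by field_simp
  set γ : ℝ := min ε c with hγ_def
  have hγ : 0 < γ := lt_min hε hc
  have hγε : γ ≤ ε := min_le_left _ _
  have hγc : γ ≤ c := min_le_right _ _
  have hγhalf : γ ≤ 1 / 2 := hγc.trans (min_le_right _ _)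
  set κ : ℝ := (T + 1) / γ with hκ_def
  have hκ : 0 < κ := by positivity
  have hκγ : κ * γ = T + 1 := div_mul_cancel₀ _ hγ.ne'
  set u : ℝ := κ * (1 - γ) + T with hu_def
  have hu : 0 < u := by nlinarith
  refine ⟨u, hu, κ, hκ, ?_, ?_, ?_⟩
  · -- every informed Bob accepts
    intro μ hμ
    have hinf1 : (⨅ θ, μ θ / ρ θ) ≤ 1 := fiInf_ratio_le_one μ ρ hμ hρ hρpos
    by_cases hd : euclDist μ ρ < η
    · -- near ρ: learn via an affordable experiment
      obtain ⟨E, hE, hΥ, hC⟩ := hA' μ hμ hd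
      right
      refine ⟨E, hE, ne_top_of_le_ne_top ENNReal.ofReal_ne_top hC, ?_⟩
      have hCT : (C E μ).toReal ≤ T := by
        refine ENNReal.toReal_le_of_le_ofReal hT hC
      have hrw : ∀ s, (⨅ θ, μ θ * E.χ θ s * (κ / ρ θ)) = κ * ⨅ θ, μ θ * E.χ θ s / ρ θ := by
        intro s
        rw [← mul_fiInf κ hκ.le]
        exact iInf_congr fun θ => by ring
      have hsum : (∑ s, ⨅ θ, μ θ * E.χ θ s * (κ / ρ θ))
          = κ * ∑ s, ⨅ θ, μ θ * E.χ θ s / ρ θ := by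
        simp_rw [hrw]; rw [Finset.mul_sum]
      have hΥ' : (∑ s, ⨅ θ, μ θ * E.χ θ s / ρ θ) = (⨅ θ, μ θ / ρ θ) - UpsilonRho ρ E μ := by
        unfold UpsilonRho; ring
      have hS : (∑ s, ⨅ θ, μ θ * E.χ θ s / ρ θ) ≤ 1 - ε := by
        rw [hΥ']; linarith
      have : κ * ∑ s, ⨅ θ, μ θ * E.χ θ s / ρ θ ≤ κ * (1 - ε) :=
        mul_le_mul_of_nonneg_left hS hκ.le
      have hγκ : κ * γ ≤ κ * ε := mul_le_mul_of_nonneg_left hγε hκ.le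
      rw [hsum]
      nlinarith
    · -- far from ρ: accept without learning
      left
      have hbound : (⨅ θ, μ θ / ρ θ) ≤ 1 - c := by
        by_contra hcon
        push_neg at hcon
        have hall : ∀ θ, (1 - c) * ρ θ < μ θ := by
          intro θ
          have h1 : 1 - c < μ θ / ρ θ := lt_of_lt_of_le hcon (fiInf_le _ θ)
          exact (lt_div_iff₀ (hρpos θ)).mp h1
        exact hd (lt_of_lt_of_le (dist_lt_of_ratio_big μ ρ hμ hρ hρpos c hc hall) hsnc)
      have hrw : (⨅ θ, μ θ * (κ / ρ θ)) = κ * ⨅ θ, μ θ / ρ θ := by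
        rw [← mul_fiInf κ hκ.le]
        exact iInf_congr fun θ => by ring
      have h1 : κ * (⨅ θ, μ θ / ρ θ) ≤ κ * (1 - c) := mul_le_mul_of_nonneg_left hbound hκ.le
      have h2 : κ * γ ≤ κ * c := mul_le_mul_of_nonneg_left hγc hκ.le
      rw [hrw]
      nlinarith
  · -- uninformed Bob's best payoff is u − κ
    have : ∀ θ : Θ, u - ρ θ * (κ / ρ θ) = u - κ := by
      intro θ
      rw [mul_div_assoc', mul_comm, mul_div_assoc, div_self (hρpos θ).ne', mul_one]
    simp_rw [this]
    exact ciSup_const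
  · -- and it is negative
    nlinarith
end
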